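/- If 0 < b < 1/2, then there is a constant c (depending only on b) such that for all β > 0 and all real α: ∫_{|x|<β} dx / (⟨x⟩^{4b-1}·|α-x|^{1/2}) ≤ c·(1+β)^{2-4b} / ⟨α⟩^{1/2}, where ⟨x⟩ = (1+x²)^{1/2}. -/

import Mathlib

open MeasureTheory Set

namespace Stmt6Aux

noncomputable def J (t : ℝ) : ℝ := |t| ^ (-(1:ℝ)/2)

lemma J_nonneg (t : ℝ) : 0 ≤ J t := Real.rpow_nonneg (abs_nonneg t) _

lemma J_neg (t : ℝ) : J (-t) = J t := by simp [J]

lemma J_intble₀ {v : ℝ} (hv : 0 ≤ v) : IntervalIntegrable J volume 0 v := by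
  have h := intervalIntegral.intervalIntegrable_rpow' (a := 0) (b := v) (r := -(1:ℝ)/2) (by norm_num)
  rw [intervalIntegrable_iff, uIoc_of_le hv] at h ⊢
  exact h.congr_fun (fun t ht => by rw [J, abs_of_pos ht.1]) measurableSet_Ioc

lemma J_intble (u v : ℝ) : IntervalIntegrable J volume u v := by
  suffices H : ∀ w : ℝ, IntervalIntegrable J volume 0 w by
    exact (H u).symm.trans (H v)
  intro w
  rcases le_total 0 w with hw | hw
  · exact J_intble₀ hw
  · rw [IntervalIntegrable.iff_comp_neg]
    have h1 : IntervalIntegrable (fun x => J (-x)) volume (-0) (-w) := by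
      simp only [J_neg, neg_zero]
      exact J_intble₀ (by linarith)
    exact h1

lemma J_int_nonneg {u v : ℝ} (hu : 0 ≤ u) (huv : u ≤ v) :
    ∫ t in u..v, J t = 2 * (Real.sqrt v - Real.sqrt u) := by
  have h1 : ∫ t in u..v, J t = ∫ t in u..v, t ^ (-(1:ℝ)/2) := by
    apply intervalIntegral.integral_congr
    intro t ht
    rw [uIcc_of_le huv] at ht
    rw [J, abs_of_nonneg (le_trans hu ht.1)]
  rw [h1, integral_rpow (Or.inl (by norm_num))]
  rw [show -(1:ℝ)/2 + 1 = 1/2 by norm_num]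
  rw [← Real.sqrt_eq_rpow, ← Real.sqrt_eq_rpow]
  ring

lemma J_int_symm {r : ℝ} (hr : 0 ≤ r) : ∫ t in (-r)..r, J t = 4 * Real.sqrt r := by
  have h0 : ∫ t in (-r)..(0:ℝ), J t = 2 * Real.sqrt r := by
    have h := intervalIntegral.integral_comp_neg (a := (0:ℝ)) (b := r) J
    simp only [J_neg, neg_zero] at h
    rw [← h, J_int_nonneg le_rfl hr, Real.sqrt_zero]
    ring
  have hadd := intervalIntegral.integral_add_adjacent_intervals
    (J_intble (-r) 0) (J_intble 0 r)
  rw [← hadd, h0, J_int_nonneg le_rfl hr, Real.sqrt_zero]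
  ring

lemma rpow_ratio {C p s t : ℝ} (hC : 1 ≤ C) (hp : |p| ≤ 1) (ht : 0 < t)
    (h1 : t / C ≤ s) (h2 : s ≤ C * t) : s ^ p ≤ C * t ^ p := by
  have hC0 : (0:ℝ) < C := by linarith
  have hs : 0 < s := lt_of_lt_of_le (by positivity) h1
  have hp' := abs_le.mp hp
  rcases le_or_gt 0 p with hp0 | hp0
  · calc s ^ p ≤ (C * t) ^ p := Real.rpow_le_rpow hs.le h2 hp0
      _ = C ^ p * t ^ p := Real.mul_rpow hC0.le ht.le
      _ ≤ C * t ^ p := by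
          have h4 : C ^ p ≤ C := by
            calc C ^ p ≤ C ^ (1:ℝ) := Real.rpow_le_rpow_of_exponent_le hC hp'.2
              _ = C := Real.rpow_one C
          exact mul_le_mul_of_nonneg_right h4 (Real.rpow_nonneg ht.le p)
  · have h4 : C ^ (-p) ≤ C := by
      calc C ^ (-p) ≤ C ^ (1:ℝ) := Real.rpow_le_rpow_of_exponent_le hC (by linarith)
        _ = C := Real.rpow_one C
    calc s ^ p ≤ (t / C) ^ p := Real.rpow_le_rpow_of_nonpos (by positivity) h1 hp0.le
      _ = t ^ p / C ^ p := Real.div_rpow ht.le hC0.le p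
      _ = t ^ p * C ^ (-p) := by
          rw [Real.rpow_neg hC0.le, div_eq_mul_inv]
      _ ≤ t ^ p * C := mul_le_mul_of_nonneg_left h4 (Real.rpow_nonneg ht.le p)
      _ = C * t ^ p := mul_comm _ _

lemma bracket_one_le (x : ℝ) : 1 ≤ Real.sqrt (1 + x^2) := by
  rw [Real.one_le_sqrt]
  nlinarith

lemma bracket_le (x : ℝ) : Real.sqrt (1 + x^2) ≤ 1 + |x| := by
  rw [show (1:ℝ) + |x| = Real.sqrt ((1+|x|)^2) from
    (Real.sqrt_sq (by positivity)).symm]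
  apply Real.sqrt_le_sqrt
  nlinarith [abs_nonneg x, sq_abs x]

lemma le_bracket (x : ℝ) : |x| ≤ Real.sqrt (1 + x^2) := by
  rw [show |x| = Real.sqrt (x^2) from (Real.sqrt_sq_eq_abs x).symm]
  exact Real.sqrt_le_sqrt (by nlinarith)

lemma bracket_ge_half (x : ℝ) : 1 + |x| ≤ 2 * Real.sqrt (1 + x^2) := by
  have h1 := bracket_one_le x
  have h2 := le_bracket x
  linarith

end Stmt6Aux

open Stmt6Aux

theorem stmt_6 (b : ℝ) (hb0 : 0 < b) (hb : b < 1/2) :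
    ∃ c : ℝ, 0 < c ∧ ∀ (β : ℝ), 0 < β → ∀ α : ℝ,
      ∫ x in {x : ℝ | |x| < β},
          1 / (Real.sqrt (1 + x^2) ^ (4*b - 1) * |α - x| ^ ((1:ℝ)/2))
        ≤ c * (1 + β) ^ (2 - 4*b) / Real.sqrt (1 + α^2) ^ ((1:ℝ)/2) := by
  have h2b : (0:ℝ) < 2 - 4*b := by linarith
  refine ⟨8/(2-4*b) + 64, by positivity, ?_⟩
  intro β hβ α
  set p : ℝ := 1 - 4*b with hpdef
  have hpabs : |p| ≤ 1 := abs_le.mpr ⟨by rw [hpdef]; linarith, by rw [hpdef]; linarith⟩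
  set Aα : ℝ := Real.sqrt (1 + α^2) with hAαdef
  have hAα1 : 1 ≤ Aα := bracket_one_le α
  have hAα0 : (0:ℝ) < Aα := lt_of_lt_of_le one_pos hAα1
  have hAαle : Aα ≤ 1 + |α| := bracket_le α
  have hAαge : 1 + |α| ≤ 2 * Aα := bracket_ge_half α
  set r : ℝ := (1 + |α|)/4 with hrdef
  have hr0 : (0:ℝ) < r := by positivity
  have hdom : {x : ℝ | |x| < β} = Ioo (-β) β := by
    ext x; simp [abs_lt]
  rw [hdom]
  set S : Set ℝ := Ioo (-β) β with hSdef
  set T : Set ℝ := Ioo (α - r) (α + r) with hTdef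
  set f : ℝ → ℝ := fun x =>
    1 / (Real.sqrt (1 + x^2) ^ (4*b - 1) * |α - x| ^ ((1:ℝ)/2)) with hfdef
  set g : ℝ → ℝ := fun x => 4 * Aα ^ (-(1:ℝ)/2) * (1 + |x|) ^ p with hgdef
  set F : ℝ → ℝ := fun x => 4 * Aα ^ p * J (α - x) with hFdef
  set h : ℝ → ℝ := T.indicator F with hhdef
  have hg_nonneg : ∀ x, 0 ≤ g x := by
    intro x
    have : (0:ℝ) ≤ Aα ^ (-(1:ℝ)/2) := Real.rpow_nonneg hAα0.le _
    have : (0:ℝ) ≤ (1 + |x|) ^ p := Real.rpow_nonneg (by positivity) _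
    rw [hgdef]
    positivity
  have hF_nonneg : ∀ x, 0 ≤ F x := by
    intro x
    have h1 : (0:ℝ) ≤ Aα ^ p := Real.rpow_nonneg hAα0.le _
    have h2 := J_nonneg (α - x)
    rw [hFdef]
    positivity
  have hh_nonneg : ∀ x, 0 ≤ h x := by
    intro x
    rw [hhdef]
    exact indicator_nonneg (fun y _ => hF_nonneg y) x
  -- pointwise bound
  have key : ∀ x, f x ≤ g x + h x := by
    intro x
    have hAx1 : 1 ≤ Real.sqrt (1 + x^2) := bracket_one_le x
    have hAx0 : (0:ℝ) < Real.sqrt (1 + x^2) := lt_of_lt_of_le one_pos hAx1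
    by_cases hax : α - x = 0
    · have : f x = 0 := by
        rw [hfdef]
        simp only [hax, abs_zero]
        rw [Real.zero_rpow (by norm_num : (1:ℝ)/2 ≠ 0)]
        simp
      rw [this]
      exact add_nonneg (hg_nonneg x) (hh_nonneg x)
    · have habs0 : (0:ℝ) < |α - x| := abs_pos.mpr hax
      have hfx : f x = Real.sqrt (1 + x^2) ^ p * J (α - x) := by
        rw [hfdef, J]
        simp only
        rw [one_div, mul_inv,
          ← Real.rpow_neg (Real.sqrt_nonneg _), ← Real.rpow_neg (abs_nonneg _)]
        congr 1
        · congr 1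
          rw [hpdef]; ring
        · congr 1
          ring
      have hJnn := J_nonneg (α - x)
      rcases lt_or_ge |α - x| r with hreg | hreg
      · -- region B
        have hxT : x ∈ T := by
          rw [hTdef]
          have := abs_lt.mp hreg
          constructor <;> [linarith [this.2]; linarith [this.1]]
        have hhx : h x = F x := by rw [hhdef, indicator_of_mem hxT]
        have hb1 : |x| ≤ |α| + |α - x| := by
          have := abs_sub_abs_le_abs_sub x α
          rw [abs_sub_comm x α] at this
          linarith [this]
        have hb2 : |α| ≤ |x| + |α - x| := by
          have := abs_sub_abs_le_abs_sub α x
          linarith [this]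
        have hAxle : Real.sqrt (1 + x^2) ≤ 1 + |x| := bracket_le x
        have hAxge : 1 + |x| ≤ 2 * Real.sqrt (1 + x^2) := bracket_ge_half x
        have hub : Real.sqrt (1 + x^2) ≤ 4 * Aα := by
          rw [hrdef] at hreg
          linarith
        have hlb : Aα / 4 ≤ Real.sqrt (1 + x^2) := by
          rw [hrdef] at hreg
          linarith
        have hpow : Real.sqrt (1 + x^2) ^ p ≤ 4 * Aα ^ p :=
          rpow_ratio (by norm_num) hpabs hAα0 hlb hub
        have : f x ≤ F x := by
          rw [hfx, hFdef]
          exact mul_le_mul_of_nonneg_right hpow hJnn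
        calc f x ≤ F x := this
          _ = h x := hhx.symm
          _ ≤ g x + h x := le_add_of_nonneg_left (hg_nonneg x)
      · -- region A
        have hAxle : Real.sqrt (1 + x^2) ≤ 1 + |x| := bracket_le x
        have hAxge : 1 + |x| ≤ 2 * Real.sqrt (1 + x^2) := bracket_ge_half x
        have hx0 : (0:ℝ) < 1 + |x| := by positivity
        have hpow1 : Real.sqrt (1 + x^2) ^ p ≤ 2 * (1 + |x|) ^ p := by
          apply rpow_ratio (by norm_num) hpabs hx0
          · linarith
          · linarith
        have hpow2 : J (α - x) ≤ 2 * Aα ^ (-(1:ℝ)/2) := by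
          have hlb : Aα / 4 ≤ |α - x| := by
            rw [hrdef] at hreg
            linarith
          have h4 : (4:ℝ) ^ (-(1:ℝ)/2) = 1/2 := by
            rw [show -(1:ℝ)/2 = -(1/2) by norm_num,
              Real.rpow_neg (by norm_num : (0:ℝ) ≤ 4), ← Real.sqrt_eq_rpow,
              show (4:ℝ) = 2^2 by norm_num, Real.sqrt_sq (by norm_num : (0:ℝ) ≤ 2)]
            norm_num
          calc J (α - x) ≤ (Aα / 4) ^ (-(1:ℝ)/2) := by
                rw [J]
                exact Real.rpow_le_rpow_of_nonpos (by positivity) hlb (by norm_num)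
            _ = Aα ^ (-(1:ℝ)/2) / (4:ℝ) ^ (-(1:ℝ)/2) :=
                Real.div_rpow hAα0.le (by norm_num) _
            _ = 2 * Aα ^ (-(1:ℝ)/2) := by rw [h4]; ring
        have hgx : f x ≤ g x := by
          rw [hfx, hgdef]
          have := mul_le_mul hpow1 hpow2 hJnn
            (by positivity : (0:ℝ) ≤ 2 * (1 + |x|) ^ p)
          calc Real.sqrt (1 + x^2) ^ p * J (α - x)
              ≤ 2 * (1 + |x|) ^ p * (2 * Aα ^ (-(1:ℝ)/2)) := this
            _ = 4 * Aα ^ (-(1:ℝ)/2) * (1 + |x|) ^ p := by ring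
        exact le_trans hgx (le_add_of_nonneg_right (hh_nonneg x))
  -- integrability
  have hgc : Continuous g := by
    apply Continuous.mul continuous_const
    exact (continuous_const.add continuous_abs).rpow_const
      (fun x => Or.inl (ne_of_gt (by positivity : (0:ℝ) < 1 + |x|)))
  have hgi : IntegrableOn g S := by
    exact (hgc.integrableOn_Icc (a := -β) (b := β)).mono_set Ioo_subset_Icc_self
  have hFi_T : IntegrableOn F T := by
    have h1 := (J_intble (-r) r).comp_sub_left α
    rw [show α - -r = α + r by ring] at h1
    have h2 : IntegrableOn (fun x => J (α - x)) T := by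
      rw [hTdef]
      exact (intervalIntegrable_iff_integrableOn_Ioo_of_le (by linarith)).mp h1.symm
    rw [hFdef]
    exact h2.const_mul _
  have hhi : IntegrableOn h S := by
    rw [hhdef]
    exact ((hFi_T.integrable_indicator measurableSet_Ioo).restrict)
  have hfm : Measurable f := by
    have hdc : Continuous fun x : ℝ =>
        Real.sqrt (1 + x^2) ^ (4*b - 1) * |α - x| ^ ((1:ℝ)/2) := by
      apply Continuous.mul
      · apply Continuous.rpow_const
        · exact Real.continuous_sqrt.comp (continuous_const.add (continuous_pow 2))
        · intro x
          exact Or.inl (ne_of_gt (lt_of_lt_of_le one_pos (bracket_one_le x)))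
      · exact ((continuous_const.sub continuous_id).abs).rpow_const
          (fun x => Or.inr (by norm_num))
    rw [hfdef]
    exact measurable_const.div hdc.measurable
  have hf_nonneg : ∀ x, 0 ≤ f x := by
    intro x
    rw [hfdef]
    have h1 : (0:ℝ) ≤ Real.sqrt (1 + x^2) ^ (4*b - 1) :=
      Real.rpow_nonneg (Real.sqrt_nonneg _) _
    have h2 : (0:ℝ) ≤ |α - x| ^ ((1:ℝ)/2) := Real.rpow_nonneg (abs_nonneg _) _
    positivity
  have hfi : IntegrableOn f S := by
    apply Integrable.mono (hgi.add hhi) hfm.aestronglyMeasurable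
    apply ae_of_all
    intro x
    simp only [Pi.add_apply, Real.norm_eq_abs]
    rw [abs_of_nonneg (hf_nonneg x),
      abs_of_nonneg (add_nonneg (hg_nonneg x) (hh_nonneg x))]
    exact key x
  -- main estimate
  have step1 : ∫ x in S, f x ≤ (∫ x in S, g x) + ∫ x in S, h x := by
    rw [← integral_add hgi hhi]
    exact integral_mono hfi (hgi.add hhi) key
  -- bound on ∫ g
  have hGbound : ∫ x in S, g x ≤
      8/(2-4*b) * ((1 + β) ^ (2 - 4*b) * Aα ^ (-(1:ℝ)/2)) := by
    have e0 : ∫ x in S, g x = 4 * Aα ^ (-(1:ℝ)/2) * ∫ x in S, (1 + |x|) ^ p := by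
      simp only [hgdef]
      exact integral_const_mul _ _
    have contp : Continuous fun x : ℝ => (1 + |x|) ^ p :=
      (continuous_const.add continuous_abs).rpow_const (fun x => Or.inl (ne_of_gt (by positivity : (0:ℝ) < 1 + |x|)))
    have e1 : ∫ x in S, (1 + |x|) ^ p = ∫ x in (-β)..β, (1 + |x|) ^ p := by
      rw [intervalIntegral.integral_of_le (by linarith), hSdef,
        ← integral_Ioc_eq_integral_Ioo]
    have e2 : (∫ x in (-β)..(0:ℝ), (1 + |x|) ^ p) = ∫ x in (0:ℝ)..β, (1 + |x|) ^ p := by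
      have hcn := intervalIntegral.integral_comp_neg
        (a := (0:ℝ)) (b := β) (fun x => (1 + |x|) ^ p)
      simp only [abs_neg, neg_zero] at hcn
      exact hcn.symm
    have e3 : ∫ x in (0:ℝ)..β, (1 + |x|) ^ p = ((1+β) ^ (p+1) - 1)/(p+1) := by
      rw [intervalIntegral.integral_congr (g := fun x => (1 + x) ^ p)
        (fun x hx => by
          rw [uIcc_of_le hβ.le] at hx
          simp only
          rw [abs_of_nonneg hx.1])]
      rw [intervalIntegral.integral_comp_add_left (fun u => u ^ p) 1]
      rw [integral_rpow (Or.inl (by rw [hpdef]; linarith))]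
      rw [add_zero, Real.one_rpow]
    have e4 : ∫ x in (-β)..β, (1 + |x|) ^ p = 2 * (((1+β) ^ (p+1) - 1)/(p+1)) := by
      rw [← intervalIntegral.integral_add_adjacent_intervals
        (contp.intervalIntegrable (-β) 0) (contp.intervalIntegrable 0 β),
        e2, e3]
      ring
    have hp1 : p + 1 = 2 - 4*b := by rw [hpdef]; ring
    have hb5 : (0:ℝ) < (1+β) ^ (p+1) := Real.rpow_pos_of_pos (by linarith) _
    have e5 : ∫ x in S, (1 + |x|) ^ p ≤ 2 * (1+β) ^ (2-4*b) / (2-4*b) := by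
      rw [e1, e4, hp1]
      rw [hp1] at hb5
      calc 2 * (((1+β) ^ (2-4*b) - 1)/(2-4*b))
          = 2 * ((1+β) ^ (2-4*b) - 1)/(2-4*b) := by ring
        _ ≤ 2 * (1+β) ^ (2-4*b) / (2-4*b) := by gcongr <;> linarith
    rw [e0]
    have hAq : (0:ℝ) ≤ Aα ^ (-(1:ℝ)/2) := Real.rpow_nonneg hAα0.le _
    calc 4 * Aα ^ (-(1:ℝ)/2) * ∫ x in S, (1 + |x|) ^ p
        ≤ 4 * Aα ^ (-(1:ℝ)/2) * (2 * (1+β) ^ (2-4*b) / (2-4*b)) := by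
          apply mul_le_mul_of_nonneg_left e5 (by positivity)
      _ = 8/(2-4*b) * ((1 + β) ^ (2 - 4*b) * Aα ^ (-(1:ℝ)/2)) := by ring
  -- bound on ∫ h
  have hHbound : ∫ x in S, h x ≤ 64 * ((1 + β) ^ (2 - 4*b) * Aα ^ (-(1:ℝ)/2)) := by
    have hRHS : (0:ℝ) ≤ 64 * ((1 + β) ^ (2 - 4*b) * Aα ^ (-(1:ℝ)/2)) := by
      have h1 : (0:ℝ) ≤ (1 + β) ^ (2 - 4*b) := Real.rpow_nonneg (by linarith) _
      have h2 : (0:ℝ) ≤ Aα ^ (-(1:ℝ)/2) := Real.rpow_nonneg hAα0.le _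
      positivity
    have e0 : ∫ x in S, h x = ∫ x in S ∩ T, F x := by
      rw [hhdef]
      exact setIntegral_indicator measurableSet_Ioo
    rcases le_or_gt Aα (2*(1+β)) with hcase | hcase
    · -- near case : go through T
      have m1 : ∫ x in S ∩ T, F x ≤ ∫ x in T, F x := by
        apply setIntegral_mono_set hFi_T (ae_of_all _ hF_nonneg)
        exact HasSubset.Subset.eventuallyLE inter_subset_right
      have e2 : ∫ x in T, F x = 4 * Aα ^ p * ∫ x in T, J (α - x) := by
        simp only [hFdef]
        exact integral_const_mul _ _
      have e3 : ∫ x in T, J (α - x) = 4 * Real.sqrt r := by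
        rw [hTdef, ← integral_Ioc_eq_integral_Ioo,
          ← intervalIntegral.integral_of_le (by linarith : α - r ≤ α + r)]
        rw [intervalIntegral.integral_comp_sub_left J α]
        rw [show α - (α + r) = -r by ring, show α - (α - r) = r by ring]
        exact J_int_symm hr0.le
      have hsr : Real.sqrt r ≤ Aα ^ ((1:ℝ)/2) := by
        rw [← Real.sqrt_eq_rpow]
        apply Real.sqrt_le_sqrt
        rw [hrdef]
        linarith
      have hApnn : (0:ℝ) ≤ Aα ^ p := Real.rpow_nonneg hAα0.le _
      have m2 : ∫ x in T, F x ≤ 16 * (Aα ^ p * Aα ^ ((1:ℝ)/2)) := by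
        rw [e2, e3]
        calc 4 * Aα ^ p * (4 * Real.sqrt r) = 16 * (Aα ^ p * Real.sqrt r) := by ring
          _ ≤ 16 * (Aα ^ p * Aα ^ ((1:ℝ)/2)) := by
              apply mul_le_mul_of_nonneg_left _ (by norm_num)
              exact mul_le_mul_of_nonneg_left hsr hApnn
      have e6 : Aα ^ p * Aα ^ ((1:ℝ)/2) = Aα ^ (2-4*b) * Aα ^ (-(1:ℝ)/2) := by
        rw [← Real.rpow_add hAα0, ← Real.rpow_add hAα0]
        congr 1
        rw [hpdef]; ring
      have e7 : Aα ^ (2-4*b) ≤ 4 * (1+β) ^ (2-4*b) := by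
        calc Aα ^ (2-4*b) ≤ (2*(1+β)) ^ (2-4*b) :=
            Real.rpow_le_rpow hAα0.le hcase h2b.le
          _ = 2 ^ (2-4*b) * (1+β) ^ (2-4*b) :=
            Real.mul_rpow (by norm_num) (by linarith)
          _ ≤ 4 * (1+β) ^ (2-4*b) := by
            apply mul_le_mul_of_nonneg_right _ (Real.rpow_nonneg (by linarith) _)
            calc (2:ℝ) ^ (2-4*b) ≤ 2 ^ (2:ℝ) :=
                Real.rpow_le_rpow_of_exponent_le (by norm_num) (by linarith)
              _ = 4 := by
                rw [show (2:ℝ) = ((2:ℕ):ℝ) from by norm_num]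
                rw [Real.rpow_natCast]
                norm_num
      have hAqnn : (0:ℝ) ≤ Aα ^ (-(1:ℝ)/2) := Real.rpow_nonneg hAα0.le _
      calc ∫ x in S, h x = ∫ x in S ∩ T, F x := e0
        _ ≤ ∫ x in T, F x := m1
        _ ≤ 16 * (Aα ^ p * Aα ^ ((1:ℝ)/2)) := m2
        _ = 16 * (Aα ^ (2-4*b) * Aα ^ (-(1:ℝ)/2)) := by rw [e6]
        _ ≤ 16 * ((4 * (1+β) ^ (2-4*b)) * Aα ^ (-(1:ℝ)/2)) := by
            apply mul_le_mul_of_nonneg_left _ (by norm_num)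
            exact mul_le_mul_of_nonneg_right e7 hAqnn
        _ = 64 * ((1 + β) ^ (2 - 4*b) * Aα ^ (-(1:ℝ)/2)) := by ring
    · -- far case : S ∩ T = ∅
      have hST : S ∩ T = ∅ := by
        ext x
        simp only [hSdef, hTdef, mem_inter_iff, mem_Ioo, mem_empty_iff_false,
          iff_false, not_and, and_imp]
        intro h1 h2 h3 h4
        exfalso
        have hxb : |x| < β := abs_lt.mpr ⟨h1, h2⟩
        have hax : |α - x| < r := abs_lt.mpr ⟨by linarith, by linarith⟩
        have habs : |α| - |x| ≤ |α - x| := by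
          have := abs_sub_abs_le_abs_sub α x
          linarith
        rw [hrdef] at hax
        linarith
      rw [e0, hST]
      simp only [setIntegral_empty]
      exact hRHS
  -- conclusion
  have hfinal : (8/(2-4*b) + 64) * (1 + β) ^ (2 - 4*b) / Aα ^ ((1:ℝ)/2)
      = 8/(2-4*b) * ((1 + β) ^ (2 - 4*b) * Aα ^ (-(1:ℝ)/2))
        + 64 * ((1 + β) ^ (2 - 4*b) * Aα ^ (-(1:ℝ)/2)) := by
    have hq : Aα ^ (-(1:ℝ)/2) = (Aα ^ ((1:ℝ)/2))⁻¹ := by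
      rw [show -(1:ℝ)/2 = -((1:ℝ)/2) by norm_num, Real.rpow_neg hAα0.le]
    rw [hq]
    have hpos : (0:ℝ) < Aα ^ ((1:ℝ)/2) := Real.rpow_pos_of_pos hAα0 _
    field_simp
  rw [hfinal]
  calc ∫ x in S, f x ≤ (∫ x in S, g x) + ∫ x in S, h x := step1
    _ ≤ 8/(2-4*b) * ((1 + β) ^ (2 - 4*b) * Aα ^ (-(1:ℝ)/2))
        + 64 * ((1 + β) ^ (2 - 4*b) * Aα ^ (-(1:ℝ)/2)) := add_le_add hGbound hHbound
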